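/- Convexity of the rational-approximation feasibility set: Fix m ∈ ℕ, ε ≥ 0, and a function M : 𝕋 → ℝ on the unit circle. The set of pairs of coefficient vectors ((p₀,…,p_m), (q₀,…,q_m)) ∈ ℝ^{m+1} × ℝ^{m+1} such that the associated symmetric Laurent polynomials P and Q satisfy (i) P(z) > 0 and Q(z) > 0 for all z ∈ 𝕋, (ii) q₀ = 1, and (iii) |P(z)/Q(z) − M(z)| ≤ ε for all z ∈ 𝕋, is a convex subset of ℝ^{2(m+1)}. -/

import Mathlib

noncomputable section

/-- Evaluation of the symmetric Laurent polynomial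
`P(z) = p₀ + ∑_{k=1}^m p_k (z^k + z^{−k})` with coefficient vector `p`. -/
def lEval (m : ℕ) (p : Fin (m + 1) → ℝ) (z : ℂ) : ℂ :=
  (∑ k : Fin (m + 1), (p k : ℂ) * (z ^ (k : ℕ) + z⁻¹ ^ (k : ℕ))) - (p 0 : ℂ)

lemma lEval_comb (m : ℕ) (a b : ℝ) (p q : Fin (m + 1) → ℝ) (z : ℂ) :
    lEval m (a • p + b • q) z = (a : ℂ) * lEval m p z + (b : ℂ) * lEval m q z := by
  simp only [lEval, Pi.add_apply, Pi.smul_apply, smul_eq_mul, Complex.ofReal_add,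
    Complex.ofReal_mul]
  have h : (∑ k : Fin (m + 1), ((a : ℂ) * (p k : ℂ) + (b : ℂ) * (q k : ℂ))
        * (z ^ (k : ℕ) + z⁻¹ ^ (k : ℕ)))
      = (a : ℂ) * (∑ k : Fin (m + 1), (p k : ℂ) * (z ^ (k : ℕ) + z⁻¹ ^ (k : ℕ)))
        + (b : ℂ) * (∑ k : Fin (m + 1), (q k : ℂ) * (z ^ (k : ℕ) + z⁻¹ ^ (k : ℕ))) := by
    rw [Finset.mul_sum, Finset.mul_sum, ← Finset.sum_add_distrib]
    exact Finset.sum_congr rfl fun k _ => by ring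
  rw [h]
  ring

open ComplexOrder in
/-- Convexity of the rational-approximation feasibility set. -/
theorem stmt_12 (m : ℕ) (ε : ℝ) (hε : 0 ≤ ε) (M : ℂ → ℝ) :
    Convex ℝ {pq : (Fin (m + 1) → ℝ) × (Fin (m + 1) → ℝ) |
      (∀ z : ℂ, ‖z‖ = 1 → 0 < lEval m pq.1 z ∧ 0 < lEval m pq.2 z) ∧
      pq.2 0 = 1 ∧
      (∀ z : ℂ, ‖z‖ = 1 →
        ‖lEval m pq.1 z / lEval m pq.2 z - (M z : ℂ)‖ ≤ ε)} := by
  rintro ⟨p1, q1⟩ ⟨hpos1, hq1, hab1⟩ ⟨p2, q2⟩ ⟨hpos2, hq2, hab2⟩ a b ha hb hab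
  -- positivity helper
  have pos_comb : ∀ x y : ℂ, 0 < x → 0 < y → 0 < (a : ℂ) * x + (b : ℂ) * y := by
    intro x y hx hy
    rw [Complex.lt_def] at hx hy ⊢
    obtain ⟨hxr, hxi⟩ := hx
    obtain ⟨hyr, hyi⟩ := hy
    constructor
    · simp only [Complex.add_re, Complex.mul_re, Complex.ofReal_re, Complex.ofReal_im,
        Complex.zero_re, zero_mul, sub_zero] at *
      rcases eq_or_lt_of_le ha with h | h
      · have hb1 : b = 1 := by linarith
        rw [← h, hb1]
        simpa using hyr
      · have h1 := mul_pos h hxr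
        have h2 := mul_nonneg hb hyr.le
        linarith
    · simp only [Complex.add_im, Complex.mul_im, Complex.ofReal_re, Complex.ofReal_im,
        Complex.zero_im] at *
      simp [← hxi, ← hyi]
  -- abs condition helper: for Q > 0, |P/Q - M| ≤ ε ↔ |P - M*Q| ≤ ε * Q.re
  have key : ∀ (P Q : ℂ) (Mz : ℝ), 0 < Q →
      (‖P / Q - (Mz : ℂ)‖ ≤ ε ↔ ‖P - (Mz : ℂ) * Q‖ ≤ ε * Q.re) := by
    intro P Q Mz hQ
    rw [Complex.lt_def] at hQ
    obtain ⟨hQr, hQi⟩ := hQ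
    simp only [Complex.zero_re, Complex.zero_im] at hQr hQi
    have hQeq : Q = ((Q.re : ℝ) : ℂ) := by
      apply Complex.ext <;> simp [← hQi]
    have hQne : Q ≠ 0 := by
      rw [hQeq]; exact_mod_cast (ne_of_gt (by exact_mod_cast hQr) : ((Q.re : ℝ) : ℂ) ≠ 0)
    have : P / Q - (Mz : ℂ) = (P - (Mz : ℂ) * Q) / Q := by field_simp
    rw [this, norm_div]
    have habsQ : ‖Q‖ = Q.re := by
      rw [hQeq, Complex.norm_real, Real.norm_eq_abs]
      simp [abs_of_pos hQr]
    rw [habsQ, div_le_iff₀ hQr]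
  refine ⟨?_, ?_, ?_⟩
  · intro z hz
    have h1 := hpos1 z hz
    have h2 := hpos2 z hz
    constructor
    · rw [show ((a • (p1, q1) + b • (p2, q2) :
        (Fin (m + 1) → ℝ) × (Fin (m + 1) → ℝ)).1) = a • p1 + b • p2 from rfl, lEval_comb]
      exact pos_comb _ _ h1.1 h2.1
    · rw [show ((a • (p1, q1) + b • (p2, q2) :
        (Fin (m + 1) → ℝ) × (Fin (m + 1) → ℝ)).2) = a • q1 + b • q2 from rfl, lEval_comb]
      exact pos_comb _ _ h1.2 h2.2
  · show (a • q1 + b • q2) 0 = 1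
    have h1 : q1 0 = 1 := hq1
    have h2 : q2 0 = 1 := hq2
    simp only [Pi.add_apply, Pi.smul_apply, smul_eq_mul, h1, h2]
    linarith
  · intro z hz
    have h1 := hpos1 z hz
    have h2 := hpos2 z hz
    have e1 : lEval m ((a • (p1, q1) + b • (p2, q2) :
        (Fin (m + 1) → ℝ) × (Fin (m + 1) → ℝ)).1) z
        = (a : ℂ) * lEval m p1 z + (b : ℂ) * lEval m p2 z := lEval_comb ..
    have e2 : lEval m ((a • (p1, q1) + b • (p2, q2) :
        (Fin (m + 1) → ℝ) × (Fin (m + 1) → ℝ)).2) z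
        = (a : ℂ) * lEval m q1 z + (b : ℂ) * lEval m q2 z := lEval_comb ..
    rw [e1, e2, key _ _ _ (pos_comb _ _ h1.2 h2.2)]
    have k1 := (key _ _ (M z) h1.2).mp (hab1 z hz)
    have k2 := (key _ _ (M z) h2.2).mp (hab2 z hz)
    have split : (a : ℂ) * lEval m p1 z + (b : ℂ) * lEval m p2 z
        - (M z : ℂ) * ((a : ℂ) * lEval m q1 z + (b : ℂ) * lEval m q2 z)
        = (a : ℂ) * (lEval m p1 z - (M z : ℂ) * lEval m q1 z)
          + (b : ℂ) * (lEval m p2 z - (M z : ℂ) * lEval m q2 z) := by ring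
    rw [split]
    calc ‖_‖ ≤ ‖(a : ℂ) * (lEval m p1 z - (M z : ℂ) * lEval m q1 z)‖
          + ‖(b : ℂ) * (lEval m p2 z - (M z : ℂ) * lEval m q2 z)‖ :=
        norm_add_le _ _
      _ = a * ‖lEval m p1 z - (M z : ℂ) * lEval m q1 z‖
          + b * ‖lEval m p2 z - (M z : ℂ) * lEval m q2 z‖ := by
        simp [norm_mul, Complex.norm_real, abs_of_nonneg ha, abs_of_nonneg hb]
      _ ≤ a * (ε * (lEval m q1 z).re) + b * (ε * (lEval m q2 z).re) := by
        gcongr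
      _ ≤ ε * ((a : ℂ) * lEval m q1 z + (b : ℂ) * lEval m q2 z).re := by
        simp only [Complex.add_re, Complex.mul_re, Complex.ofReal_re, Complex.ofReal_im]
        nlinarith [(lEval m q1 z).im, (lEval m q2 z).im]
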